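/- If (C, Δ) is a coassociative coalgebra and α : C → C is a coalgebra endomorphism, then C_α = (C, Δ_α, α) with Δ_α = Δ ∘ α is a Hom-coassociative coalgebra; i.e., Δ_α satisfies comultiplicativity (Δ_α ∘ α = (α ⊗ α) ∘ Δ_α) and Hom-coassociativity ((α ⊗ Δ_α) ∘ Δ_α = (Δ_α ⊗ α) ∘ Δ_α). -/
import Mathlib


open TensorProduct

/-- Deforming a coassociative coalgebra along a coalgebra endomorphism
yields a Hom-coassociative coalgebra. -/
theorem stmt_0 {F : Type*} [Field F] {C : Type*} [AddCommGroup C] [Module F C]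
    (Δ : C →ₗ[F] C ⊗[F] C) (α : C →ₗ[F] C)
    -- Δ is coassociative
    (hcoassoc : LinearMap.lTensor C Δ ∘ₗ Δ =
      (TensorProduct.assoc F C C C).toLinearMap ∘ₗ LinearMap.rTensor C Δ ∘ₗ Δ)
    -- α is a coalgebra endomorphism
    (hα : Δ ∘ₗ α = TensorProduct.map α α ∘ₗ Δ) :
    -- comultiplicativity of Δ_α = Δ ∘ α
    (Δ ∘ₗ α) ∘ₗ α = TensorProduct.map α α ∘ₗ (Δ ∘ₗ α) ∧
    -- Hom-coassociativity of Δ_α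
    TensorProduct.map α (Δ ∘ₗ α) ∘ₗ (Δ ∘ₗ α) =
      (TensorProduct.assoc F C C C).toLinearMap ∘ₗ
        TensorProduct.map (Δ ∘ₗ α) α ∘ₗ (Δ ∘ₗ α) := by
  have h1 : TensorProduct.map α (Δ ∘ₗ α) =
      LinearMap.lTensor C Δ ∘ₗ TensorProduct.map α α := by
    ext x y; simp
  have h2 : TensorProduct.map (Δ ∘ₗ α) α =
      LinearMap.rTensor C Δ ∘ₗ TensorProduct.map α α := by
    ext x y; simp
  constructor
  · rw [hα, LinearMap.comp_assoc, hα]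
  · calc TensorProduct.map α (Δ ∘ₗ α) ∘ₗ (Δ ∘ₗ α)
        = LinearMap.lTensor C Δ ∘ₗ (TensorProduct.map α α ∘ₗ Δ) ∘ₗ α := by
          rw [h1]; simp only [LinearMap.comp_assoc]
      _ = (LinearMap.lTensor C Δ ∘ₗ Δ) ∘ₗ (α ∘ₗ α) := by
          rw [← hα]; simp only [LinearMap.comp_assoc]
      _ = ((TensorProduct.assoc F C C C).toLinearMap ∘ₗ LinearMap.rTensor C Δ ∘ₗ Δ) ∘ₗ (α ∘ₗ α) := by
          rw [hcoassoc]
      _ = (TensorProduct.assoc F C C C).toLinearMap ∘ₗ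
            LinearMap.rTensor C Δ ∘ₗ (TensorProduct.map α α ∘ₗ Δ) ∘ₗ α := by
          rw [← hα]; simp only [LinearMap.comp_assoc]
      _ = (TensorProduct.assoc F C C C).toLinearMap ∘ₗ
            TensorProduct.map (Δ ∘ₗ α) α ∘ₗ (Δ ∘ₗ α) := by
          rw [h2]; simp only [LinearMap.comp_assoc]
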